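/- Let D be a measurable subset of the open unit disc {z ∈ ℂ : |z| < 1}, let ε > 0 and ψ ∈ (0, 2π], and let W := {(z₁,z₂) ∈ ℂ² : z₂ ∈ D, 0 < |z₁| ≤ √(1−|z₂|²)·tanh(ε/2), |Arg z₁| ≤ ψ/2} (the wedge of width ε and sector angle ψ anchored at D). Then, as an equality of Lebesgue integrals (with values in [0,∞]), ∫_W 16/(1 − |z₁|² − |z₂|²)³ d(z₁,z₂) = ψ·(cosh⁴(ε/2) − 1) · ∫_D 4/(1−|z|²)² dz. In words: the complex hyperbolic volume of the wedge anchored at D equals ψ(cosh⁴(ε/2) − 1) times the hyperbolic area of D. -/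

import Mathlib

open Complex Real MeasureTheory ENNReal Set

lemma polar_symm_eq : ⇑Complex.polarCoord.symm =
    (Complex.measurableEquivRealProd.symm : ℝ × ℝ → ℂ) ∘ ⇑polarCoord.symm := by
  funext p
  simp only [Function.comp_apply, Complex.polarCoord_symm_apply, polarCoord_symm_apply,
    Complex.measurableEquivRealProd_symm_apply]
  apply Complex.ext <;> simp [Complex.cos_ofReal_re, Complex.sin_ofReal_re]

lemma lintegral_polar (A : Set (ℝ × ℝ)) (hA : MeasurableSet A)
    (hAsub : A ⊆ polarCoord.target) (g : ℂ → ℝ≥0∞) :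
    ∫⁻ z in Complex.polarCoord.symm '' A, g z
      = ∫⁻ p in A, ENNReal.ofReal p.1 * g (Complex.polarCoord.symm p) := by
  have hemb : MeasurableEmbedding (Complex.measurableEquivRealProd.symm : ℝ × ℝ → ℂ) :=
    Complex.measurableEquivRealProd.symm.measurableEmbedding
  have hmp : MeasurePreserving (Complex.measurableEquivRealProd.symm : ℝ × ℝ → ℂ) :=
    Complex.volume_preserving_equiv_real_prod.symm _
  set B : ℝ × ℝ → ℝ × ℝ →L[ℝ] ℝ × ℝ := fun p =>
    LinearMap.toContinuousLinearMap (Matrix.toLin (Module.Basis.finTwoProd ℝ) (Module.Basis.finTwoProd ℝ)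
      !![Real.cos p.2, -p.1 * Real.sin p.2; Real.sin p.2, p.1 * Real.cos p.2]) with hB
  have hBd : ∀ p ∈ A, HasFDerivWithinAt polarCoord.symm (B p) A p := fun p _ =>
    (hasFDerivAt_polarCoord_symm p).hasFDerivWithinAt
  have B_det : ∀ p, (B p).det = p.1 := by
    intro p
    conv_rhs => rw [← one_mul p.1, ← Real.cos_sq_add_sin_sq p.2]
    simp only [hB, neg_mul, LinearMap.det_toContinuousLinearMap, LinearMap.det_toLin,
      Matrix.det_fin_two_of, sub_neg_eq_add]
    ring
  have hinj : Set.InjOn polarCoord.symm A :=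
    polarCoord.symm.injOn.mono (by rwa [OpenPartialHomeomorph.symm_source])
  calc ∫⁻ z in Complex.polarCoord.symm '' A, g z
      = ∫⁻ q in polarCoord.symm '' A, g (Complex.measurableEquivRealProd.symm q) := by
        rw [hmp.setLIntegral_comp_emb hemb, polar_symm_eq, Set.image_comp]
    _ = ∫⁻ p in A, ENNReal.ofReal |(B p).det| *
          g (Complex.measurableEquivRealProd.symm (polarCoord.symm p)) :=
        lintegral_image_eq_lintegral_abs_det_fderiv_mul volume hA hBd hinj _
    _ = ∫⁻ p in A, ENNReal.ofReal p.1 * g (Complex.polarCoord.symm p) := by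
        apply setLIntegral_congr_fun hA
        intro p hp
        dsimp only
        rw [B_det, abs_of_pos (hAsub hp).1, polar_symm_eq, Function.comp_apply]

lemma radial_lintegral (b R : ℝ) (hb : 0 < b) (hR : 0 ≤ R) (hRb : R ^ 2 < b) :
    ∫⁻ r in Set.Ioc (0:ℝ) R, ENNReal.ofReal r * ENNReal.ofReal (16 / (b - r ^ 2) ^ 3)
      = ENNReal.ofReal (4 / (b - R ^ 2) ^ 2 - 4 / b ^ 2) := by
  have hpos : ∀ r ∈ Set.Icc (0:ℝ) R, 0 < b - r ^ 2 := by
    intro r hr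
    have : r ^ 2 ≤ R ^ 2 := by nlinarith [hr.1, hr.2]
    linarith
  have hg : ∀ r ∈ Set.Icc (0:ℝ) R,
      HasDerivAt (fun r : ℝ => 4 / (b - r ^ 2) ^ 2) (r * (16 / (b - r ^ 2) ^ 3)) r := by
    intro r hr
    have h0 : b - r ^ 2 ≠ 0 := (hpos r hr).ne'
    have h1 : HasDerivAt (fun r : ℝ => (b - r ^ 2) ^ 2)
        (2 * (b - r ^ 2) ^ 1 * (-(2 * r))) r := by
      have h2 : HasDerivAt (fun r : ℝ => b - r ^ 2) (-(2 * r)) r := by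
        simpa using (hasDerivAt_pow 2 r).const_sub b
      exact h2.pow 2
    have h2 := (h1.inv (pow_ne_zero 2 h0)).const_mul (4:ℝ)
    have hfun : (fun r : ℝ => 4 / (b - r ^ 2) ^ 2)
        = fun r : ℝ => 4 * (((b - r ^ 2) ^ 2)⁻¹) := by
      funext x; rw [div_eq_mul_inv]
    rw [hfun]
    exact h2.congr_deriv (by field_simp; ring)
  have hcont : ContinuousOn (fun r : ℝ => r * (16 / (b - r ^ 2) ^ 3)) (Set.Icc 0 R) := by
    apply continuousOn_id.mul
    exact continuousOn_const.div
      ((continuousOn_const.sub (continuousOn_id.pow 2)).pow 3)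
      (fun r hr => pow_ne_zero 3 (hpos r hr).ne')
  have hInt : IntegrableOn (fun r : ℝ => r * (16 / (b - r ^ 2) ^ 3)) (Set.Ioc 0 R) :=
    (hcont.integrableOn_compact isCompact_Icc).mono_set Set.Ioc_subset_Icc_self
  have hBo : ∫ r in (0:ℝ)..R, r * (16 / (b - r ^ 2) ^ 3)
      = 4 / (b - R ^ 2) ^ 2 - 4 / b ^ 2 := by
    rw [intervalIntegral.integral_eq_sub_of_hasDerivAt
      (fun x hx => hg x (by rwa [Set.uIcc_of_le hR] at hx))
      ((intervalIntegrable_iff_integrableOn_Ioc_of_le hR).mpr hInt)]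
    norm_num
  calc ∫⁻ r in Set.Ioc (0:ℝ) R, ENNReal.ofReal r * ENNReal.ofReal (16 / (b - r ^ 2) ^ 3)
      = ∫⁻ r in Set.Ioc (0:ℝ) R, ENNReal.ofReal (r * (16 / (b - r ^ 2) ^ 3)) := by
        apply setLIntegral_congr_fun measurableSet_Ioc
        intro r hr
        dsimp only
        rw [ENNReal.ofReal_mul hr.1.le]
    _ = ENNReal.ofReal (∫ r in Set.Ioc (0:ℝ) R, r * (16 / (b - r ^ 2) ^ 3)) := by
        rw [ofReal_integral_eq_lintegral_ofReal hInt]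
        apply (ae_restrict_iff' measurableSet_Ioc).mpr
        filter_upwards with r hr
        exact mul_nonneg hr.1.le (div_nonneg (by norm_num)
          (pow_nonneg (hpos r ⟨hr.1.le, hr.2⟩).le 3))
    _ = ENNReal.ofReal (4 / (b - R ^ 2) ^ 2 - 4 / b ^ 2) := by
        rw [← intervalIntegral.integral_of_le hR, hBo]

lemma sector_lintegral (c : ℝ) (hc : c < 1) (ε ψ : ℝ) (hε : 0 < ε)
    (hψ0 : 0 < ψ) (hψ1 : ψ ≤ 2 * Real.pi) :
    ∫⁻ z in {z : ℂ | 0 < ‖z‖ ∧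
        ‖z‖ ≤ Real.sqrt (1 - c) * Real.tanh (ε / 2) ∧
        |Complex.arg z| ≤ ψ / 2},
      ENNReal.ofReal (16 / (1 - ‖z‖ ^ 2 - c) ^ 3) ∂volume
    = ENNReal.ofReal (ψ * (Real.cosh (ε / 2) ^ 4 - 1)) *
        ENNReal.ofReal (4 / (1 - c) ^ 2) := by
  set b : ℝ := 1 - c with hbdef
  have hb : 0 < b := by simp [hbdef]; linarith
  set R : ℝ := Real.sqrt b * Real.tanh (ε / 2) with hRdef
  have ht0 : 0 < Real.tanh (ε / 2) := by
    rw [Real.tanh_eq_sinh_div_cosh]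
    exact div_pos (Real.sinh_pos_iff.mpr (by linarith)) (Real.cosh_pos _)
  have ht1 : Real.tanh (ε / 2) < 1 := by
    rw [Real.tanh_eq_sinh_div_cosh, div_lt_one (Real.cosh_pos _)]
    nlinarith [Real.cosh_sub_sinh (ε / 2), Real.exp_pos (-(ε / 2))]
  have hR0 : 0 < R := mul_pos (Real.sqrt_pos.mpr hb) ht0
  have hR2 : R ^ 2 = b * Real.tanh (ε / 2) ^ 2 := by
    rw [hRdef, mul_pow, Real.sq_sqrt hb.le]
  have hRb : R ^ 2 < b := by
    rw [hR2]
    have h2 : Real.tanh (ε / 2) ^ 2 < 1 := by nlinarith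
    nlinarith [mul_lt_mul_of_pos_left h2 hb]
  set T : Set ℝ := Set.Ioo (-Real.pi) Real.pi ∩ Set.Icc (-(ψ / 2)) (ψ / 2) with hTdef
  set A : Set (ℝ × ℝ) := Set.Ioc (0 : ℝ) R ×ˢ T with hAdef
  have hψπ : ψ / 2 ≤ Real.pi := by linarith
  have hAm : MeasurableSet A :=
    (measurableSet_Ioc.prod ((measurableSet_Ioo.inter measurableSet_Icc)))
  have hAsub : A ⊆ polarCoord.target := by
    rintro ⟨r, θ⟩ ⟨hr, hθ⟩
    exact ⟨hr.1, (hθ.1 : θ ∈ Set.Ioo _ _)⟩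
  set S : Set ℂ := {z : ℂ | 0 < ‖z‖ ∧
      ‖z‖ ≤ R ∧ |Complex.arg z| ≤ ψ / 2} with hSdef
  have himg : Complex.polarCoord.symm '' A = S \ {z : ℂ | Complex.arg z = Real.pi} := by
    ext z
    constructor
    · rintro ⟨p, hp, rfl⟩
      have hpt : p ∈ Complex.polarCoord.target := by
        rw [Complex.polarCoord_target]
        exact ⟨hp.1.1, hp.2.1⟩
      have hzp : Complex.polarCoord (Complex.polarCoord.symm p) = p :=
        Complex.polarCoord.right_inv hpt
      rw [Complex.polarCoord_apply] at hzp
      have habs : ‖Complex.polarCoord.symm p‖ = p.1 := congrArg Prod.fst hzp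
      have harg : Complex.arg (Complex.polarCoord.symm p) = p.2 := congrArg Prod.snd hzp
      refine ⟨⟨?_, ?_, ?_⟩, ?_⟩
      · rw [habs]; exact hp.1.1
      · rw [habs]; exact hp.1.2
      · rw [harg]; exact abs_le.mpr ⟨hp.2.2.1, hp.2.2.2⟩
      · simp only [Set.mem_setOf_eq, harg]
        exact hp.2.1.2.ne
    · rintro ⟨hzS, hzne⟩
      simp only [Set.mem_setOf_eq] at hzne
      have hz0 : z ≠ 0 := by
        intro h; rw [h] at hzS; simp [hSdef] at hzS
      have hzsrc : z ∈ Complex.polarCoord.source := by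
        rw [Complex.polarCoord_source]
        exact Complex.mem_slitPlane_iff_arg.mpr ⟨hzne, hz0⟩
      refine ⟨Complex.polarCoord z, ?_, Complex.polarCoord.left_inv hzsrc⟩
      rw [Complex.polarCoord_apply]
      obtain ⟨h1, h2, h3⟩ := hzS
      refine ⟨⟨h1, h2⟩, ⟨Complex.neg_pi_lt_arg z, lt_of_le_of_ne (Complex.arg_le_pi z) hzne⟩,
        abs_le.mp h3⟩
  have hnull : volume {z : ℂ | Complex.arg z = Real.pi} = 0 := by
    have hsub : {z : ℂ | Complex.arg z = Real.pi} ⊆ {z : ℂ | z.im = 0} := by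
      intro z hz
      exact (Complex.arg_eq_pi_iff.mp hz).2
    have him : volume {z : ℂ | z.im = 0} = 0 := by
      have heq : {z : ℂ | z.im = 0}
          = Complex.measurableEquivRealProd ⁻¹' (Set.univ ×ˢ ({0} : Set ℝ)) := by
        ext z
        simp [Complex.measurableEquivRealProd_apply, eq_comm]
      rw [heq, Complex.volume_preserving_equiv_real_prod.measure_preimage
        (MeasurableSet.univ.prod (measurableSet_singleton 0)).nullMeasurableSet]
      rw [Measure.volume_eq_prod, Measure.prod_prod, Real.volume_singleton, mul_zero]
    exact measure_mono_null hsub him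
  have hae : S =ᵐ[volume] Complex.polarCoord.symm '' A := by
    rw [himg]
    exact (diff_ae_eq_self.mpr (measure_mono_null Set.inter_subset_right hnull)).symm
  rw [setLIntegral_congr hae, lintegral_polar A hAm hAsub]
  have hstep : ∫⁻ p in A, ENNReal.ofReal p.1 *
      ENNReal.ofReal (16 / (1 - ‖Complex.polarCoord.symm p‖ ^ 2 - c) ^ 3)
      = ∫⁻ p in A, ENNReal.ofReal p.1 * ENNReal.ofReal (16 / (b - p.1 ^ 2) ^ 3) := by
    apply setLIntegral_congr_fun hAm
    intro p hp
    dsimp only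
    congr 2
    rw [Complex.norm_polarCoord_symm, _root_.sq_abs]
    ring
  rw [hstep]
  have hTvol : volume T = ENNReal.ofReal ψ := by
    apply le_antisymm
    · calc volume T ≤ volume (Set.Icc (-(ψ / 2)) (ψ / 2)) :=
            measure_mono Set.inter_subset_right
        _ = ENNReal.ofReal ψ := by rw [Real.volume_Icc]; congr 1; ring
    · have hsub : Set.Ioo (-(ψ / 2)) (ψ / 2) ⊆ T := by
        intro x hx
        exact ⟨⟨by linarith [hx.1], by linarith [hx.2]⟩, hx.1.le, hx.2.le⟩
      calc ENNReal.ofReal ψ = volume (Set.Ioo (-(ψ / 2)) (ψ / 2)) := by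
            rw [Real.volume_Ioo]; congr 1; ring
        _ ≤ volume T := measure_mono hsub
  have hFm : Measurable fun p : ℝ × ℝ =>
      ENNReal.ofReal p.1 * ENNReal.ofReal (16 / (b - p.1 ^ 2) ^ 3) := by
    refine Measurable.mul (f := fun p : ℝ × ℝ => ENNReal.ofReal p.1)
      (g := fun p : ℝ × ℝ => ENNReal.ofReal (16 / (b - p.1 ^ 2) ^ 3)) ?_ ?_
    · exact ENNReal.measurable_ofReal.comp measurable_fst
    · exact ENNReal.measurable_ofReal.comp
        (measurable_const.div ((measurable_const.sub (measurable_fst.pow_const 2)).pow_const 3))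
  have hprod : ∫⁻ p in A, ENNReal.ofReal p.1 * ENNReal.ofReal (16 / (b - p.1 ^ 2) ^ 3)
      = (∫⁻ r in Set.Ioc (0:ℝ) R,
          ENNReal.ofReal r * ENNReal.ofReal (16 / (b - r ^ 2) ^ 3)) * ENNReal.ofReal ψ := by
    rw [hAdef, Measure.volume_eq_prod, ← Measure.prod_restrict,
      lintegral_prod _ (hFm.aemeasurable)]
    simp only [lintegral_const, Measure.restrict_apply_univ, hTvol]
    exact lintegral_mul_const' _ _ ENNReal.ofReal_ne_top
  rw [hprod, radial_lintegral b R hb hR0.le hRb]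
  -- final arithmetic
  set ch : ℝ := Real.cosh (ε / 2) with hchdef
  have hch : 0 < ch := Real.cosh_pos _
  have hch1 : 1 ≤ ch := Real.one_le_cosh _
  have hid : ch ^ 2 - Real.sinh (ε / 2) ^ 2 = 1 := Real.cosh_sq_sub_sinh_sq _
  have hbR : b - R ^ 2 = b / ch ^ 2 := by
    rw [hR2, Real.tanh_eq_sinh_div_cosh]
    field_simp
    nlinarith [hid]
  have hreal : 4 / (b - R ^ 2) ^ 2 - 4 / b ^ 2 = (ch ^ 4 - 1) * (4 / b ^ 2) := by
    rw [hbR]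
    field_simp
  rw [hreal, ENNReal.ofReal_mul (by nlinarith [hch1] : (0:ℝ) ≤ ch ^ 4 - 1),
    ENNReal.ofReal_mul hψ0.le]
  ring


/-- The complex hyperbolic volume of the wedge of width `ε` and sector angle `ψ`
anchored at a region `D` in a complex line equals `ψ(cosh⁴(ε/2) − 1)` times the
hyperbolic area of `D`. -/
theorem volume_of_wedge
    (D : Set ℂ) (hD : MeasurableSet D) (hD1 : D ⊆ {z : ℂ | ‖z‖ < 1})
    (ε ψ : ℝ) (hε : 0 < ε) (hψ0 : 0 < ψ) (hψ1 : ψ ≤ 2 * Real.pi)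
    (W : Set (ℂ × ℂ))
    (hW : W = {p : ℂ × ℂ | p.2 ∈ D ∧ 0 < ‖p.1‖ ∧
      ‖p.1‖ ≤ Real.sqrt (1 - ‖p.2‖ ^ 2) * Real.tanh (ε / 2) ∧
      |Complex.arg p.1| ≤ ψ / 2}) :
    ∫⁻ p in W, ENNReal.ofReal
        (16 / (1 - ‖p.1‖ ^ 2 - ‖p.2‖ ^ 2) ^ 3) ∂volume
      = ENNReal.ofReal (ψ * (Real.cosh (ε / 2) ^ 4 - 1)) *
        ∫⁻ z in D, ENNReal.ofReal (4 / (1 - ‖z‖ ^ 2) ^ 2) ∂volume := by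
  subst hW
  set f : ℂ × ℂ → ℝ≥0∞ := fun p =>
    ENNReal.ofReal (16 / (1 - ‖p.1‖ ^ 2 - ‖p.2‖ ^ 2) ^ 3) with hfdef
  set C : ℝ≥0∞ := ENNReal.ofReal (ψ * (Real.cosh (ε / 2) ^ 4 - 1)) with hCdef
  have habs_m : Measurable fun z : ℂ => ‖z‖ := continuous_norm.measurable
  have hfm : Measurable f := by
    apply ENNReal.measurable_ofReal.comp
    exact measurable_const.div
      (((measurable_const.sub (((habs_m.comp measurable_fst).pow_const 2))).sub
        ((habs_m.comp measurable_snd).pow_const 2)).pow_const 3)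
  have hsect : ∀ w : ℂ, MeasurableSet {z : ℂ | 0 < ‖z‖ ∧
      ‖z‖ ≤ Real.sqrt (1 - ‖w‖ ^ 2) * Real.tanh (ε / 2) ∧
      |Complex.arg z| ≤ ψ / 2} := by
    intro w
    rw [Set.setOf_and, Set.setOf_and]
    refine (habs_m measurableSet_Ioi).inter
      ((measurableSet_le habs_m measurable_const).inter
        (measurableSet_le Complex.measurable_arg.abs measurable_const))
  have hWm : MeasurableSet {p : ℂ × ℂ | p.2 ∈ D ∧ 0 < ‖p.1‖ ∧
      ‖p.1‖ ≤ Real.sqrt (1 - ‖p.2‖ ^ 2) * Real.tanh (ε / 2) ∧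
      |Complex.arg p.1| ≤ ψ / 2} := by
    rw [Set.setOf_and, Set.setOf_and, Set.setOf_and]
    refine (measurable_snd hD).inter
      (((habs_m.comp measurable_fst) measurableSet_Ioi).inter
        ((measurableSet_le (habs_m.comp measurable_fst)
          (((measurable_const.sub ((habs_m.comp measurable_snd).pow_const 2)).sqrt).mul
            measurable_const)).inter
          (measurableSet_le ((Complex.measurable_arg.comp measurable_fst).abs)
            measurable_const)))
  set W : Set (ℂ × ℂ) := {p : ℂ × ℂ | p.2 ∈ D ∧ 0 < ‖p.1‖ ∧
      ‖p.1‖ ≤ Real.sqrt (1 - ‖p.2‖ ^ 2) * Real.tanh (ε / 2) ∧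
      |Complex.arg p.1| ≤ ψ / 2} with hWdef
  calc ∫⁻ p in W, f p ∂volume
      = ∫⁻ p, W.indicator f p ∂volume := (lintegral_indicator hWm f).symm
    _ = ∫⁻ z₂, ∫⁻ z₁, W.indicator f (z₁, z₂) ∂volume ∂volume := by
        rw [Measure.volume_eq_prod, lintegral_prod_symm _ (hfm.indicator hWm).aemeasurable]
    _ = ∫⁻ z₂, D.indicator
          (fun w => C * ENNReal.ofReal (4 / (1 - ‖w‖ ^ 2) ^ 2)) z₂ ∂volume := by
        apply lintegral_congr
        intro z₂
        by_cases hz : z₂ ∈ D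
        · have h1 : ∀ z₁ : ℂ, W.indicator f (z₁, z₂)
              = Set.indicator {z : ℂ | 0 < ‖z‖ ∧
                  ‖z‖ ≤ Real.sqrt (1 - ‖z₂‖ ^ 2) * Real.tanh (ε / 2) ∧
                  |Complex.arg z| ≤ ψ / 2} (fun z₁ => f (z₁, z₂)) z₁ := by
            intro z₁
            classical
            rw [Set.indicator_apply, Set.indicator_apply]
            simp only [hWdef, Set.mem_setOf_eq, hz, true_and]
          have hc : ‖z₂‖ ^ 2 < 1 := by
            have := hD1 hz
            simp only [Set.mem_setOf_eq] at this
            nlinarith [norm_nonneg z₂]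
          rw [Set.indicator_of_mem hz]
          simp only [h1]
          rw [lintegral_indicator (hsect z₂)]
          exact sector_lintegral (‖z₂‖ ^ 2) hc ε ψ hε hψ0 hψ1
        · rw [Set.indicator_of_notMem hz]
          have h1 : ∀ z₁ : ℂ, W.indicator f (z₁, z₂) = 0 := by
            intro z₁
            apply Set.indicator_of_notMem
            intro hmem
            exact hz hmem.1
          simp only [h1, lintegral_zero]
    _ = ∫⁻ z₂ in D, C * ENNReal.ofReal (4 / (1 - ‖z₂‖ ^ 2) ^ 2) ∂volume :=
        lintegral_indicator hD _
    _ = C * ∫⁻ z in D, ENNReal.ofReal (4 / (1 - ‖z‖ ^ 2) ^ 2) ∂volume :=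
        lintegral_const_mul' _ _ ENNReal.ofReal_ne_top
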